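/- Let d < n be positive integers with d ≡ r (mod 2) for some r ∈ {0,1}. Let F be a family of subsets of [n] with VC-dimension of F Δ F at most d. Then |F| ≤ 2^r · ∑_{k=0}^{⌊d/2⌋} C(n−r, k). -/

import Mathlib

open Finset
open scoped symmDiff

def ShattersFam {n : ℕ} (F : Finset (Finset (Fin n))) (M : Finset (Fin n)) : Prop :=
  ∀ S ⊆ M, ∃ A ∈ F, A ∩ M = S

def symmDiffFam {n : ℕ} (F : Finset (Finset (Fin n))) : Finset (Finset (Fin n)) :=
  Finset.image₂ (· ∆ ·) F F

open UV
open scoped FinsetFamily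

namespace CGK

lemma compress_eligible {y j : ℕ} {A : Finset ℕ} (h : UV.compress {y} {j} A ≠ A) :
    y ∉ A ∧ j ∈ A := by
  rw [UV.compress] at h
  split_ifs at h with hc
  · exact ⟨disjoint_singleton_left.1 hc.1, singleton_subset_iff.1 hc.2⟩
  · exact absurd rfl h

lemma compress_eq_of {y j : ℕ} {A : Finset ℕ} (hy : y ∉ A) (hj : j ∈ A) :
    UV.compress {y} {j} A = insert y (A.erase j) := by
  have hyj : y ≠ j := fun h => hy (h ▸ hj)
  rw [UV.compress, if_pos ⟨disjoint_singleton_left.2 hy, singleton_subset_iff.2 hj⟩]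
  ext x
  simp only [sup_eq_union, mem_sdiff, mem_union, mem_singleton, mem_insert, mem_erase]
  constructor
  · rintro ⟨h1 | h1, h2⟩
    · exact Or.inr ⟨h2, h1⟩
    · exact Or.inl h1
  · rintro (rfl | ⟨h1, h2⟩)
    · exact ⟨Or.inr rfl, hyj⟩
    · exact ⟨Or.inl h2, h1⟩

lemma sum_compress_lt {y j : ℕ} {A : Finset ℕ} (hyj : y < j)
    (h : UV.compress {y} {j} A ≠ A) :
    ∑ x ∈ UV.compress {y} {j} A, x < ∑ x ∈ A, x := by
  obtain ⟨hy, hj⟩ := compress_eligible h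
  rw [compress_eq_of hy hj, sum_insert (fun hc => hy (mem_of_mem_erase hc))]
  have h2 : ∑ x ∈ A.erase j, x + j = ∑ x ∈ A, x := Finset.sum_erase_add _ _ hj
  omega

/-- family measure for termination -/
def fam_measure (D : Finset (Finset ℕ)) : ℕ := ∑ A ∈ D, ∑ x ∈ A, x

lemma fam_measure_compression_lt {y j : ℕ} (hyj : y < j) {D : Finset (Finset ℕ)}
    (hne : 𝓒 {y} {j} D ≠ D) : fam_measure (𝓒 {y} {j} D) < fam_measure D := by
  rw [UV.compression] at hne ⊢
  have q : ∀ Q ∈ {A ∈ D | UV.compress {y} {j} A ∉ D}, UV.compress {y} {j} Q ≠ Q := by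
    simp_rw [mem_filter]
    intro Q hQ h
    rw [h] at hQ
    exact hQ.2 hQ.1
  have uA : {A ∈ D | UV.compress {y} {j} A ∈ D} ∪ {A ∈ D | UV.compress {y} {j} A ∉ D} = D :=
    filter_union_filter_not_eq (p := _) _
  have ne₂ : {A ∈ D | UV.compress {y} {j} A ∉ D}.Nonempty := by
    refine nonempty_iff_ne_empty.2 fun z => hne ?_
    rw [filter_image, z, image_empty, union_empty]
    rwa [z, union_empty] at uA
  rw [fam_measure, fam_measure, sum_union UV.compress_disjoint]
  conv_rhs => rw [← uA]
  rw [sum_union (disjoint_filter_filter_not _ _ _), add_lt_add_iff_left, filter_image,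
    sum_image UV.compress_injOn]
  exact sum_lt_sum_of_nonempty ne₂ fun A hA => sum_compress_lt hyj (q _ hA)

end CGK

namespace CGK

lemma mem_compression_cases {y j : ℕ} {D : Finset (Finset ℕ)} {A : Finset ℕ}
    (hA : A ∈ 𝓒 {y} {j} D) :
    A ∈ D ∨ (A ∉ D ∧ ∃ B ∈ D, y ∉ B ∧ j ∈ B ∧ A = insert y (B.erase j)) := by
  rw [UV.mem_compression] at hA
  rcases hA with ⟨h, -⟩ | ⟨h1, B, hB, hBA⟩
  · exact Or.inl h
  · by_cases hc : UV.compress {y} {j} B = B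
    · rw [hc] at hBA; exact absurd (hBA ▸ hB) h1
    · obtain ⟨hy, hj⟩ := compress_eligible hc
      exact Or.inr ⟨h1, B, hB, hy, hj, by rw [← hBA, compress_eq_of hy hj]⟩

lemma compression_subset_range {n y j : ℕ} (hy : y < n) {D : Finset (Finset ℕ)}
    (hsub : ∀ A ∈ D, A ⊆ range n) : ∀ A ∈ 𝓒 {y} {j} D, A ⊆ range n := by
  intro A hA
  rcases mem_compression_cases hA with h | ⟨-, B, hB, -, -, rfl⟩
  · exact hsub _ h
  · intro x hx
    rcases mem_insert.1 hx with rfl | hx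
    · exact mem_range.2 hy
    · exact hsub _ hB (mem_of_mem_erase hx)

lemma compression_sized {y j a : ℕ} {D : Finset (Finset ℕ)}
    (hsz : ∀ A ∈ D, A.card = a) : ∀ A ∈ 𝓒 {y} {j} D, A.card = a := by
  intro A hA
  rcases mem_compression_cases hA with h | ⟨-, B, hB, hy, hj, rfl⟩
  · exact hsz _ h
  · rw [card_insert_of_notMem (fun hc => hy (mem_of_mem_erase hc)),
      card_erase_of_mem hj]
    have := card_pos.2 ⟨j, hj⟩
    have := hsz _ hB
    omega

/-- key case analysis : t-intersecting is preserved -/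
lemma compression_intersecting {y j t : ℕ} {D : Finset (Finset ℕ)}
    (hint : ∀ A ∈ D, ∀ B ∈ D, t ≤ #(A ∩ B)) :
    ∀ A ∈ 𝓒 {y} {j} D, ∀ B ∈ 𝓒 {y} {j} D, t ≤ #(A ∩ B) := by
  -- first, an auxiliary step: A genuinely in D (with compress A ∈ D info available), B an image.
  have key : ∀ A ∈ D, UV.compress {y} {j} A ∈ D →
      ∀ B₀ ∈ D, y ∉ B₀ → j ∈ B₀ → t ≤ #(A ∩ insert y (B₀.erase j)) := by
    intro A hA hcA B₀ hB₀ hyB hjB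
    have hAB := hint _ hA _ hB₀
    by_cases hyA : y ∈ A
    · -- A ∩ (insert y (B₀.erase j)) ⊇ ((A ∩ B₀).erase j) ∪ {y}
      have hsub : insert y ((A ∩ B₀).erase j) ⊆ A ∩ insert y (B₀.erase j) := by
        intro x hx
        rcases mem_insert.1 hx with rfl | hx
        · exact mem_inter.2 ⟨hyA, mem_insert_self _ _⟩
        · obtain ⟨hxj, hxAB⟩ := mem_erase.1 hx
          obtain ⟨hxA, hxB⟩ := mem_inter.1 hxAB
          exact mem_inter.2 ⟨hxA, mem_insert_of_mem (mem_erase.2 ⟨hxj, hxB⟩)⟩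
      refine le_trans ?_ (card_le_card hsub)
      rw [card_insert_of_notMem (fun hc => hyB (mem_of_mem_inter_right (mem_of_mem_erase hc)))]
      by_cases hjAB : j ∈ A ∩ B₀
      · rw [card_erase_of_mem hjAB]; omega
      · rw [erase_eq_of_notMem hjAB]; omega
    · by_cases hjA : j ∈ A
      · -- A is eligible; compress A = insert y (A.erase j) ∈ D
        have hcA' : insert y (A.erase j) ∈ D := by rwa [compress_eq_of hyA hjA] at hcA
        have h2 := hint _ hcA' _ hB₀
        -- (insert y (A.erase j)) ∩ B₀ = (A ∩ B₀).erase j   (since y ∉ B₀)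
        have e1 : insert y (A.erase j) ∩ B₀ = (A ∩ B₀).erase j := by
          ext x
          simp only [mem_inter, mem_insert, mem_erase]
          constructor
          · rintro ⟨rfl | ⟨hxj, hxA⟩, hxB⟩
            · exact absurd hxB hyB
            · exact ⟨hxj, hxA, hxB⟩
          · rintro ⟨hxj, hxA, hxB⟩
            exact ⟨Or.inr ⟨hxj, hxA⟩, hxB⟩
        -- A ∩ insert y (B₀.erase j) = (A ∩ B₀).erase j  (since y ∉ A)
        have e2 : A ∩ insert y (B₀.erase j) = (A ∩ B₀).erase j := by
          ext x
          simp only [mem_inter, mem_insert, mem_erase]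
          constructor
          · rintro ⟨hxA, rfl | ⟨hxj, hxB⟩⟩
            · exact absurd hxA hyA
            · exact ⟨hxj, hxA, hxB⟩
          · rintro ⟨hxj, hxA, hxB⟩
            exact ⟨hxA, Or.inr ⟨hxj, hxB⟩⟩
        rw [e2, ← e1]; exact h2
      · -- j ∉ A, y ∉ A : A ∩ insert y (B₀.erase j) = A ∩ B₀
        have e : A ∩ insert y (B₀.erase j) = A ∩ B₀ := by
          ext x
          simp only [mem_inter, mem_insert, mem_erase]
          constructor
          · rintro ⟨hxA, rfl | ⟨hxj, hxB⟩⟩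
            · exact absurd hxA hyA
            · exact ⟨hxA, hxB⟩
          · rintro ⟨hxA, hxB⟩
            exact ⟨hxA, Or.inr ⟨fun h => hjA (h ▸ hxA), hxB⟩⟩
        rw [e]; exact hAB
  intro A hA B hB
  rcases mem_compression_cases hA with hA' | ⟨hA1, A₀, hA₀, hyA, hjA, rfl⟩ <;>
    rcases mem_compression_cases hB with hB' | ⟨hB1, B₀, hB₀, hyB, hjB, rfl⟩
  · exact hint _ hA' _ hB'
  · -- A ∈ D, B image; need compress A ∈ D
    have hcA : UV.compress {y} {j} A ∈ D := by
      rw [UV.mem_compression] at hA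
      rcases hA with ⟨-, h⟩ | ⟨h, -⟩
      · exact h
      · exact absurd hA' h
    exact key _ hA' hcA _ hB₀ hyB hjB
  · have hcB : UV.compress {y} {j} B ∈ D := by
      rw [UV.mem_compression] at hB
      rcases hB with ⟨-, h⟩ | ⟨h, -⟩
      · exact h
      · exact absurd hB' h
    rw [inter_comm]
    exact key _ hB' hcB _ hA₀ hyA hjA
  · -- both images
    have h0 := hint _ hA₀ _ hB₀
    have hjAB : j ∈ A₀ ∩ B₀ := mem_inter.2 ⟨hjA, hjB⟩
    have e : insert y (A₀.erase j) ∩ insert y (B₀.erase j) = insert y ((A₀ ∩ B₀).erase j) := by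
      ext x
      simp only [mem_inter, mem_insert, mem_erase]
      constructor
      · rintro ⟨rfl | ⟨hxj, hxA⟩, h2⟩
        · exact Or.inl rfl
        · rcases h2 with rfl | ⟨-, hxB⟩
          · exact Or.inl rfl
          · exact Or.inr ⟨hxj, hxA, hxB⟩
      · rintro (rfl | ⟨hxj, hxA, hxB⟩)
        · exact ⟨Or.inl rfl, Or.inl rfl⟩
        · exact ⟨Or.inr ⟨hxj, hxA⟩, Or.inr ⟨hxj, hxB⟩⟩
    rw [e, card_insert_of_notMem (fun hc => hyA (mem_of_mem_inter_left (mem_of_mem_erase hc))),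
      card_erase_of_mem hjAB]
    have := card_pos.2 ⟨j, hjAB⟩
    omega

end CGK

namespace CGK

lemma shadow_iterate_compression_subset (y j : ℕ) :
    ∀ (k : ℕ) (D : Finset (Finset ℕ)), ∂ ^[k] (𝓒 {y} {j} D) ⊆ 𝓒 {y} {j} (∂ ^[k] D) := by
  intro k
  induction k with
  | zero => intro D; exact Subset.rfl
  | succ k ih =>
    intro D
    rw [Function.iterate_succ_apply, Function.iterate_succ_apply]
    have h1 : ∂ (𝓒 {y} {j} D) ⊆ 𝓒 {y} {j} (∂ D) := by
      refine UV.shadow_compression_subset_compression_shadow _ _ ?_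
      intro x hx
      rw [mem_singleton] at hx
      subst hx
      exact ⟨j, mem_singleton_self _, by
        rw [erase_singleton, erase_singleton]; exact UV.isCompressed_self _ _⟩
    calc ∂ ^[k] (∂ (𝓒 {y} {j} D)) ⊆ ∂ ^[k] (𝓒 {y} {j} (∂ D)) := by
          exact (Finset.shadow_monotone.iterate k) h1
      _ ⊆ 𝓒 {y} {j} (∂ ^[k] (∂ D)) := ih (∂ D)

lemma card_shadow_iterate_compression_le (y j k : ℕ) (D : Finset (Finset ℕ)) :
    #(∂ ^[k] (𝓒 {y} {j} D)) ≤ #(∂ ^[k] D) := by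
  calc #(∂ ^[k] (𝓒 {y} {j} D)) ≤ #(𝓒 {y} {j} (∂ ^[k] D)) :=
        card_le_card (shadow_iterate_compression_subset y j k D)
    _ = #(∂ ^[k] D) := UV.card_compression _ _ _

lemma exists_shifted {n t a : ℕ} (D : Finset (Finset ℕ)) (hsub : ∀ A ∈ D, A ⊆ range n)
    (hsz : ∀ A ∈ D, A.card = a) (hint : ∀ A ∈ D, ∀ B ∈ D, t ≤ #(A ∩ B)) :
    ∃ E : Finset (Finset ℕ), #E = #D ∧ (∀ k, #(∂ ^[k] E) ≤ #(∂ ^[k] D)) ∧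
      (∀ A ∈ E, A ⊆ range n) ∧ (∀ A ∈ E, A.card = a) ∧
      (∀ A ∈ E, ∀ B ∈ E, t ≤ #(A ∩ B)) ∧
      ∀ y l, y < l → l < n → IsCompressed {y} {l} E := by
  classical
  set bad : Finset (ℕ × ℕ) :=
    (range n ×ˢ range n).filter (fun p => p.1 < p.2 ∧ ¬ IsCompressed {p.1} {p.2} D) with hbad
  obtain hb | ⟨⟨y, l⟩, hyl⟩ := bad.eq_empty_or_nonempty
  · refine ⟨D, rfl, fun k => le_rfl, hsub, hsz, hint, fun y l h1 h2 => ?_⟩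
    by_contra hc
    have : (y, l) ∈ bad := by
      rw [hbad, mem_filter, mem_product, mem_range, mem_range]
      exact ⟨⟨h1.trans h2, h2⟩, h1, hc⟩
    rw [hb] at this
    exact notMem_empty _ this
  · rw [hbad, mem_filter, mem_product, mem_range, mem_range] at hyl
    obtain ⟨⟨hy, hl⟩, hlt, hnc⟩ := hyl
    have hdec := fam_measure_compression_lt hlt hnc
    obtain ⟨E, e1, e2, e3, e4, e5, e6⟩ :=
      exists_shifted (𝓒 {y} {l} D) (compression_subset_range hy hsub)
        (compression_sized hsz) (compression_intersecting hint)
    exact ⟨E, e1.trans (UV.card_compression _ _ _), fun k =>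
      (e2 k).trans (card_shadow_iterate_compression_le y l k D), e3, e4, e5, e6⟩
termination_by fam_measure D

end CGK

namespace CGK

/-- Katona's intersecting shadow theorem, over ℕ. -/
theorem katona_nat : ∀ (n t a : ℕ) (D : Finset (Finset ℕ)), (∀ A ∈ D, A ⊆ range n) →
    (∀ A ∈ D, A.card = a) → (∀ A ∈ D, ∀ B ∈ D, t ≤ #(A ∩ B)) → #D ≤ #(∂ ^[t] D) := by
  intro n
  induction n using Nat.strong_induction_on with
  | _ n ih =>
  intro t a D hsub hsz hint
  by_cases ht0 : t = 0
  · subst ht0; simp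
  by_cases hD1 : #D ≤ 1
  · obtain hD0 | ⟨A, hA⟩ := D.eq_empty_or_nonempty
    · simp [hD0]
    · have hta : t ≤ a := by
        have := hint A hA A hA
        rwa [inter_self, hsz A hA] at this
      obtain ⟨T, hT, hTcard⟩ := exists_subset_card_eq (s := A) (n := a - t) (by rw [hsz A hA]; omega)
      have hTmem : T ∈ ∂ ^[t] D := by
        rw [mem_shadow_iterate_iff_exists_sdiff]
        refine ⟨A, hA, hT, ?_⟩
        rw [card_sdiff_of_subset hT, hsz A hA, hTcard]
        omega
      calc #D ≤ 1 := hD1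
        _ ≤ #(∂ ^[t] D) := card_pos.2 ⟨T, hTmem⟩
  -- now #D ≥ 2, t ≥ 1
  push_neg at hD1
  obtain ⟨A₀, hA₀, B₀, hB₀, hAB₀⟩ := Finset.one_lt_card.1 hD1
  have hta : t < a := by
    have h1 := hint A₀ hA₀ B₀ hB₀
    have h2 : #(A₀ ∩ B₀) ≤ a := by
      rw [← hsz A₀ hA₀]; exact card_le_card inter_subset_left
    rcases lt_or_eq_of_le h2 with h | h
    · omega
    · exfalso
      have e1 : A₀ ∩ B₀ = A₀ := eq_of_subset_of_card_le inter_subset_left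
        (by rw [h, hsz A₀ hA₀])
      have e2 : A₀ ⊆ B₀ := by rw [← e1]; exact inter_subset_right
      exact hAB₀ (eq_of_subset_of_card_le e2 (by rw [hsz A₀ hA₀, hsz B₀ hB₀]))
  have han : a ≤ n := by
    have := card_le_card (hsub A₀ hA₀)
    rwa [hsz A₀ hA₀, card_range] at this
  by_cases hbase : n + t ≤ 2 * a
  · -- double counting
    set s := a - t with hs
    have count1 : ∀ A ∈ D, a.choose t ≤ #((∂ ^[t] D).filter (fun S => S ⊆ A)) := by
      intro A hA
      have hsubset : A.powersetCard s ⊆ (∂ ^[t] D).filter (fun S => S ⊆ A) := by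
        intro T hT
        rw [mem_powersetCard] at hT
        obtain ⟨hTA, hTcard⟩ := hT
        rw [mem_filter, mem_shadow_iterate_iff_exists_sdiff]
        exact ⟨⟨A, hA, hTA, by rw [card_sdiff_of_subset hTA, hsz A hA, hTcard]; omega⟩, hTA⟩
      calc a.choose t = (#A).choose s := by rw [hsz A hA, hs, Nat.choose_symm hta.le]
        _ = #(A.powersetCard s) := (card_powersetCard _ _).symm
        _ ≤ _ := card_le_card hsubset
    have count2 : ∀ S ∈ ∂ ^[t] D, #(D.filter (fun A => S ⊆ A)) ≤ (n - s).choose t := by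
      intro S hS
      rw [mem_shadow_iterate_iff_exists_sdiff] at hS
      obtain ⟨C, hC, hSC, hCS⟩ := hS
      have hScard : #S = s := by
        have := card_sdiff_of_subset hSC
        have := card_le_card hSC
        rw [hsz C hC] at *
        omega
      have hSrange : S ⊆ range n := hSC.trans (hsub C hC)
      have himg : (D.filter (fun A => S ⊆ A)).image (fun A => A \ S) ⊆
          powersetCard t (range n \ S) := by
        intro X hX
        rw [mem_image] at hX
        obtain ⟨A, hA, rfl⟩ := hX
        rw [mem_filter] at hA
        rw [mem_powersetCard]
        refine ⟨sdiff_subset_sdiff (hsub A hA.1) Subset.rfl, ?_⟩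
        rw [card_sdiff_of_subset hA.2, hsz A hA.1, hScard]
        omega
      have hinj : Set.InjOn (fun A => A \ S) (D.filter (fun A => S ⊆ A)) := by
        intro X hX Y hY hXY
        rw [mem_coe, mem_filter] at hX hY
        have hXY' : X \ S = Y \ S := hXY
        have : X \ S ∪ S = Y \ S ∪ S := by rw [hXY']
        rwa [sdiff_union_of_subset hX.2, sdiff_union_of_subset hY.2] at this
      calc #(D.filter (fun A => S ⊆ A)) = #((D.filter (fun A => S ⊆ A)).image (fun A => A \ S)) :=
            (card_image_of_injOn hinj).symm
        _ ≤ #(powersetCard t (range n \ S)) := card_le_card himg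
        _ = (#(range n \ S)).choose t := card_powersetCard _ _
        _ = (n - s).choose t := by rw [card_sdiff_of_subset hSrange, card_range, hScard]
    -- swap order of summation
    have hswap : ∑ A ∈ D, #((∂ ^[t] D).filter (fun S => S ⊆ A)) =
        ∑ S ∈ ∂ ^[t] D, #(D.filter (fun A => S ⊆ A)) := by
      simp_rw [card_filter]
      exact Finset.sum_comm
    have hchain : #D * a.choose t ≤ #(∂ ^[t] D) * a.choose t := by
      calc #D * a.choose t = ∑ _A ∈ D, a.choose t := by rw [sum_const, smul_eq_mul]
        _ ≤ ∑ A ∈ D, #((∂ ^[t] D).filter (fun S => S ⊆ A)) := Finset.sum_le_sum count1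
        _ = ∑ S ∈ ∂ ^[t] D, #(D.filter (fun A => S ⊆ A)) := hswap
        _ ≤ ∑ _S ∈ ∂ ^[t] D, (n - s).choose t := Finset.sum_le_sum count2
        _ = #(∂ ^[t] D) * (n - s).choose t := by rw [sum_const, smul_eq_mul]
        _ ≤ #(∂ ^[t] D) * a.choose t := by
            refine Nat.mul_le_mul_left _ (Nat.choose_le_choose t ?_)
            omega
    exact Nat.le_of_mul_le_mul_right hchain (Nat.choose_pos hta.le)
  · -- inductive case with shifting
    push_neg at hbase
    have hn1 : n - 1 < n := by omega
    obtain ⟨E, e1, e2, e3, e4, e5, e6⟩ := exists_shifted D hsub hsz hint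
    -- key claim from shiftedness
    have key : ∀ A ∈ E, ∀ B ∈ E, (n-1) ∈ A → (n-1) ∈ B → t + 1 ≤ #(A ∩ B) := by
      intro A hA B hB hnA hnB
      by_contra hc
      push_neg at hc
      have hABt : #(A ∩ B) = t := le_antisymm (by omega) (e5 A hA B hB)
      have hABu : #(A ∪ B) + #(A ∩ B) = #A + #B := card_union_add_card_inter _ _
      have hcard : #(A ∪ B) < n := by
        rw [e4 A hA, e4 B hB] at hABu
        omega
      have hss : A ∪ B ⊂ range n := by
        refine Finset.ssubset_iff_subset_ne.2 ⟨union_subset (e3 A hA) (e3 B hB), fun h => ?_⟩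
        rw [h, card_range] at hcard
        omega
      obtain ⟨y, hyr, hyAB⟩ := exists_of_ssubset hss
      have hyn : y ≠ n - 1 := fun h => hyAB (mem_union_left _ (h ▸ hnA))
      have hylt : y < n - 1 := by
        rw [mem_range] at hyr
        omega
      have hcomp := e6 y (n-1) hylt (by omega)
      have hyB : y ∉ B := fun h => hyAB (mem_union_right _ h)
      have hB' : insert y (B.erase (n-1)) ∈ E := by
        have := UV.compress_mem_compression (u := {y}) (v := {n-1}) hB
        rwa [hcomp, compress_eq_of hyB hnB] at this
      have hint' := e5 A hA _ hB'
      have hyA : y ∉ A := fun h => hyAB (mem_union_left _ h)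
      have e : A ∩ insert y (B.erase (n-1)) = (A ∩ B).erase (n-1) := by
        ext x
        simp only [mem_inter, mem_insert, mem_erase]
        constructor
        · rintro ⟨hxA, rfl | ⟨hxj, hxB⟩⟩
          · exact absurd hxA hyA
          · exact ⟨hxj, hxA, hxB⟩
        · rintro ⟨hxj, hxA, hxB⟩
          exact ⟨hxA, Or.inr ⟨hxj, hxB⟩⟩
      rw [e, card_erase_of_mem (mem_inter.2 ⟨hnA, hnB⟩), hABt] at hint'
      omega
    set Dm := E.memberSubfamily (n-1) with hDm
    set Dn := E.nonMemberSubfamily (n-1) with hDn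
    have call1 : #Dn ≤ #(∂ ^[t] Dn) := by
      refine ih (n-1) hn1 t a Dn ?_ ?_ ?_
      · intro A hA
        rw [hDn, mem_nonMemberSubfamily] at hA
        intro x hx
        have h1 := e3 A hA.1 hx
        rw [mem_range] at h1 ⊢
        have : x ≠ n - 1 := fun h => hA.2 (h ▸ hx)
        omega
      · intro A hA
        rw [hDn, mem_nonMemberSubfamily] at hA
        exact e4 A hA.1
      · intro A hA B hB
        rw [hDn, mem_nonMemberSubfamily] at hA hB
        exact e5 A hA.1 B hB.1
    have call2 : #Dm ≤ #(∂ ^[t] Dm) := by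
      refine ih (n-1) hn1 t (a-1) Dm ?_ ?_ ?_
      · intro A hA
        rw [hDm, mem_memberSubfamily] at hA
        intro x hx
        have h1 := e3 _ hA.1 (mem_insert_of_mem hx)
        rw [mem_range] at h1 ⊢
        have : x ≠ n - 1 := fun h => hA.2 (h ▸ hx)
        omega
      · intro A hA
        rw [hDm, mem_memberSubfamily] at hA
        have := e4 _ hA.1
        rw [card_insert_of_notMem hA.2] at this
        omega
      · intro A hA B hB
        rw [hDm, mem_memberSubfamily] at hA hB
        have h1 := key _ hA.1 _ hB.1 (mem_insert_self _ _) (mem_insert_self _ _)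
        have e : insert (n-1) A ∩ insert (n-1) B = insert (n-1) (A ∩ B) := by
          ext x
          simp only [mem_inter, mem_insert]
          tauto
        rw [e, card_insert_of_notMem (fun h => hA.2 (mem_of_mem_inter_left h))] at h1
        omega
    -- injections into the shadow of E
    have h1 : ∂ ^[t] Dn ⊆ (∂ ^[t] E).filter (fun S => (n-1) ∉ S) := by
      intro S hS
      rw [mem_shadow_iterate_iff_exists_sdiff] at hS
      obtain ⟨C, hC, hSC, hCS⟩ := hS
      rw [hDn, mem_nonMemberSubfamily] at hC
      rw [mem_filter, mem_shadow_iterate_iff_exists_sdiff]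
      exact ⟨⟨C, hC.1, hSC, hCS⟩, fun h => hC.2 (hSC h)⟩
    have h2 : (∂ ^[t] Dm).image (insert (n-1)) ⊆ (∂ ^[t] E).filter (fun S => (n-1) ∈ S) := by
      intro X hX
      rw [mem_image] at hX
      obtain ⟨S, hS, rfl⟩ := hX
      rw [mem_shadow_iterate_iff_exists_sdiff] at hS
      obtain ⟨C, hC, hSC, hCS⟩ := hS
      rw [hDm, mem_memberSubfamily] at hC
      rw [mem_filter, mem_shadow_iterate_iff_exists_sdiff]
      refine ⟨⟨insert (n-1) C, hC.1, insert_subset_insert _ hSC, ?_⟩, mem_insert_self _ _⟩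
      have e : insert (n-1) C \ insert (n-1) S = C \ S := by
        ext x
        simp only [mem_sdiff, mem_insert, not_or]
        constructor
        · rintro ⟨rfl | hxC, hx1, hx2⟩
          · exact absurd rfl hx1
          · exact ⟨hxC, hx2⟩
        · rintro ⟨hxC, hxS⟩
          have : x ≠ n - 1 := fun h => hC.2 (h ▸ hxC)
          exact ⟨Or.inr hxC, this, hxS⟩
      rw [e, hCS]
    have hinj2 : #((∂ ^[t] Dm).image (insert (n-1))) = #(∂ ^[t] Dm) := by
      refine card_image_of_injOn ?_
      intro X hX Y hY hXY
      rw [mem_coe, mem_shadow_iterate_iff_exists_sdiff] at hX hY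
      obtain ⟨CX, hCX, hXC, -⟩ := hX
      obtain ⟨CY, hCY, hYC, -⟩ := hY
      rw [hDm, mem_memberSubfamily] at hCX hCY
      have hXn : (n-1) ∉ X := fun h => hCX.2 (hXC h)
      have hYn : (n-1) ∉ Y := fun h => hCY.2 (hYC h)
      have : (insert (n-1) X).erase (n-1) = (insert (n-1) Y).erase (n-1) := by rw [hXY]
      rwa [erase_insert hXn, erase_insert hYn] at this
    calc #D = #E := e1.symm
      _ = #Dm + #Dn := (card_memberSubfamily_add_card_nonMemberSubfamily _ _).symm
      _ ≤ #(∂ ^[t] Dm) + #(∂ ^[t] Dn) := Nat.add_le_add call2 call1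
      _ = #((∂ ^[t] Dm).image (insert (n-1))) + #(∂ ^[t] Dn) := by rw [hinj2]
      _ ≤ #((∂ ^[t] E).filter (fun S => (n-1) ∈ S)) +
          #((∂ ^[t] E).filter (fun S => (n-1) ∉ S)) :=
            Nat.add_le_add (card_le_card h2) (card_le_card h1)
      _ = #(∂ ^[t] E) := card_filter_add_card_filter_not (p := fun S => (n-1) ∈ S)
      _ ≤ #(∂ ^[t] D) := e2 t

end CGK

namespace CGK

lemma shadow_image_map {n : ℕ} (𝒜 : Finset (Finset (Fin n))) :
    ∂ (𝒜.image (Finset.map Fin.valEmbedding)) = (∂ 𝒜).image (Finset.map Fin.valEmbedding) := by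
  ext T
  rw [mem_shadow_iff, mem_image]
  constructor
  · rintro ⟨s, hs, x, hx, rfl⟩
    rw [mem_image] at hs
    obtain ⟨B, hB, rfl⟩ := hs
    rw [Finset.mem_map] at hx
    obtain ⟨b, hb, rfl⟩ := hx
    exact ⟨B.erase b, erase_mem_shadow hB hb, map_erase _ _ _⟩
  · rintro ⟨u, hu, rfl⟩
    rw [mem_shadow_iff] at hu
    obtain ⟨B, hB, b, hb, rfl⟩ := hu
    refine ⟨B.map Fin.valEmbedding, mem_image_of_mem _ hB, Fin.valEmbedding b, ?_, ?_⟩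
    · rw [Finset.mem_map]; exact ⟨b, hb, rfl⟩
    · exact (map_erase _ _ _).symm

lemma shadow_iterate_image_map {n : ℕ} (k : ℕ) (𝒜 : Finset (Finset (Fin n))) :
    ∂ ^[k] (𝒜.image (Finset.map Fin.valEmbedding)) =
      (∂ ^[k] 𝒜).image (Finset.map Fin.valEmbedding) := by
  induction k generalizing 𝒜 with
  | zero => rfl
  | succ k ih =>
    rw [Function.iterate_succ_apply, Function.iterate_succ_apply, shadow_image_map, ih]

/-- Katona's intersecting shadow theorem in `Fin n`. -/
lemma katona_fin {n t a : ℕ} (D : Finset (Finset (Fin n))) (hsz : ∀ A ∈ D, A.card = a)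
    (hint : ∀ A ∈ D, ∀ B ∈ D, t ≤ #(A ∩ B)) : #D ≤ #(∂ ^[t] D) := by
  classical
  set Dm := D.image (Finset.map Fin.valEmbedding) with hDm
  have hinj : Function.Injective (Finset.map (Fin.valEmbedding (n := n))) :=
    Finset.map_injective _
  have h1 : #Dm = #D := card_image_of_injective _ hinj
  have h2 : #Dm ≤ #(∂ ^[t] Dm) := by
    refine katona_nat n t a Dm ?_ ?_ ?_
    · intro A hA
      rw [hDm, mem_image] at hA
      obtain ⟨B, hB, rfl⟩ := hA
      intro x hx
      rw [Finset.mem_map] at hx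
      obtain ⟨b, hb, rfl⟩ := hx
      exact mem_range.2 b.is_lt
    · intro A hA
      rw [hDm, mem_image] at hA
      obtain ⟨B, hB, rfl⟩ := hA
      rw [card_map]
      exact hsz B hB
    · intro A hA B hB
      rw [hDm, mem_image] at hA hB
      obtain ⟨A₀, hA₀, rfl⟩ := hA
      obtain ⟨B₀, hB₀, rfl⟩ := hB
      rw [← map_inter, card_map]
      exact hint A₀ hA₀ B₀ hB₀
  rw [h1, shadow_iterate_image_map, card_image_of_injective _ hinj] at h2
  exact h2

/-- The key pairing inequality. -/
lemma pair_bound {n d s k : ℕ} (hn : d < n) (hsk : s + k = d + 1)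
    (F : Finset (Finset (Fin n))) (hdc : ∀ A ∈ F, ∀ B ⊆ A, B ∈ F)
    (hH : ∀ A ∈ F, ∀ B ∈ F, Disjoint A B → #A + #B ≤ d) :
    #(F.filter (fun A => #A = k)) + #(F.filter (fun A => #A = s)) ≤ n.choose s := by
  classical
  set Gk := F.filter (fun A => #A = k) with hGk
  set Gs := F.filter (fun A => #A = s) with hGs
  set Gc : Finset (Finset (Fin n)) := Gk.compls with hGc
  have hcardFin : Fintype.card (Fin n) = n := Fintype.card_fin n
  have hcard_le : ∀ A : Finset (Fin n), #A ≤ n := fun A => by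
    have := card_le_univ A
    simpa using this
  have hGcsz : ∀ A ∈ Gc, #A = n - k := by
    intro A hA
    rw [hGc, mem_compls, hGk, mem_filter] at hA
    have h2 : #(Aᶜ) = n - #A := by rw [card_compl, hcardFin]
    have h3 := hcard_le A
    omega
  have hGcint : ∀ A ∈ Gc, ∀ B ∈ Gc, n - (d + 1) ≤ #(A ∩ B) := by
    intro A hA B hB
    rw [hGc, mem_compls, hGk, mem_filter] at hA hB
    have hiu : A ∩ B = (Aᶜ ∪ Bᶜ)ᶜ := by rw [compl_union, compl_compl, compl_compl]
    have hcu : #(A ∩ B) = n - #(Aᶜ ∪ Bᶜ) := by rw [hiu, card_compl, hcardFin]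
    have hub : #(Aᶜ ∪ Bᶜ) ≤ d := by
      by_cases hAB : Aᶜ = Bᶜ
      · rw [hAB, union_self, hB.2]
        -- k ≤ d
        have : ¬ (d + 1 ≤ k) := by
          intro hk
          -- then s = 0, and ∅ ∈ F, Bᶜ ∈ F disjoint with ∅
          have hs0 : s = 0 := by omega
          have hem : (∅ : Finset (Fin n)) ∈ F := hdc _ hB.1 _ (empty_subset _)
          have := hH _ hB.1 _ hem (disjoint_empty_right _)
          rw [hB.2, card_empty] at this
          omega
        omega
      · -- #(Aᶜ \ Bᶜ) ≤ s - 1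
        have hdiff : #(Aᶜ \ Bᶜ) < s := by
          by_contra hc
          push_neg at hc
          obtain ⟨T, hT, hTcard⟩ := exists_subset_card_eq hc
          have hTF : T ∈ F := hdc _ hA.1 _ (hT.trans sdiff_subset)
          have hTd : Disjoint T Bᶜ := disjoint_of_subset_left hT sdiff_disjoint
          have := hH _ hTF _ hB.1 hTd
          rw [hTcard, hB.2] at this
          omega
        have : #(Aᶜ \ Bᶜ) + #(Bᶜ) = #(Aᶜ ∪ Bᶜ) := card_sdiff_add_card _ _
        rw [hB.2] at this
        omega
    omega
  have hkatona : #Gc ≤ #(∂ ^[n - (d+1)] Gc) := katona_fin Gc hGcsz hGcint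
  -- every member of the iterated shadow is an s-set not in F
  have hshadow : ∀ S ∈ ∂ ^[n - (d+1)] Gc, #S = s ∧ S ∉ F := by
    intro S hS
    rw [mem_shadow_iterate_iff_exists_sdiff] at hS
    obtain ⟨C, hC, hSC, hCS⟩ := hS
    have hCsz := hGcsz C hC
    have hSsz : #S = s := by
      have h1 := card_sdiff_of_subset hSC
      have h2 := card_le_card hSC
      have h3 := hcard_le C
      omega
    refine ⟨hSsz, fun hSF => ?_⟩
    rw [hGc, mem_compls, hGk, mem_filter] at hC
    have hdisj : Disjoint S Cᶜ := by
      rw [disjoint_left]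
      intro x hxS hxC
      rw [mem_compl] at hxC
      exact hxC (hSC hxS)
    have := hH _ hSF _ hC.1 hdisj
    rw [hSsz, hC.2] at this
    omega
  -- Gs and the shadow are disjoint subfamilies of level s
  have hsub1 : Gs ⊆ univ.powersetCard s := by
    intro A hA
    rw [hGs, mem_filter] at hA
    rw [mem_powersetCard]
    exact ⟨subset_univ _, hA.2⟩
  have hsub2 : ∂ ^[n - (d+1)] Gc ⊆ univ.powersetCard s := by
    intro S hS
    rw [mem_powersetCard]
    exact ⟨subset_univ _, (hshadow S hS).1⟩
  have hdisj : Disjoint Gs (∂ ^[n - (d+1)] Gc) := by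
    rw [disjoint_left]
    intro S hS1 hS2
    rw [hGs, mem_filter] at hS1
    exact (hshadow S hS2).2 hS1.1
  calc #Gk + #Gs = #Gs + #Gc := by rw [hGc, card_compls, Nat.add_comm]
    _ ≤ #Gs + #(∂ ^[n - (d+1)] Gc) := Nat.add_le_add_left hkatona _
    _ = #(Gs ∪ ∂ ^[n - (d+1)] Gc) := (card_union_of_disjoint hdisj).symm
    _ ≤ #(univ.powersetCard s) := card_le_card (union_subset hsub1 hsub2)
    _ = n.choose s := by rw [card_powersetCard, card_univ, hcardFin]

end CGK

namespace CGK

lemma sum_range_split (f : ℕ → ℕ) (a b : ℕ) :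
    ∑ k ∈ range (a+b), f k = ∑ k ∈ range a, f k + ∑ i ∈ range b, f (a+i) := by
  induction b with
  | zero => simp
  | succ b ih => rw [Nat.add_succ, sum_range_succ, sum_range_succ, ih]; ring

lemma sum_choose_identity (n t : ℕ) (hn : 1 ≤ n) :
    ∑ k ∈ range (t+1), n.choose k + (n-1).choose t = 2 * ∑ k ∈ range (t+1), (n-1).choose k := by
  induction t with
  | zero => simp
  | succ t ih =>
    rw [sum_range_succ, sum_range_succ (f := fun k => (n-1).choose k)]
    have hp : n.choose (t+1) = (n-1).choose t + (n-1).choose (t+1) := by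
      have h : n - 1 + 1 = n := by omega
      have h2 := Nat.choose_succ_succ (n-1) t
      rwa [Nat.succ_eq_add_one, Nat.succ_eq_add_one, h] at h2
    omega

lemma count_theorem {n d r : ℕ} (hd : 0 < d) (hdn : d < n) (hr : r = 0 ∨ r = 1)
    (hmod : d % 2 = r % 2) (F : Finset (Finset (Fin n)))
    (hdc : ∀ A ∈ F, ∀ B ⊆ A, B ∈ F)
    (hH : ∀ A ∈ F, ∀ B ∈ F, Disjoint A B → #A + #B ≤ d) :
    F.card ≤ 2 ^ r * ∑ k ∈ range (d / 2 + 1), (n - r).choose k := by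
  classical
  obtain hFe | hFne := F.eq_empty_or_nonempty
  · simp [hFe]
  set t := d / 2 with ht
  set f : ℕ → ℕ := fun k => #(F.filter (fun A => #A = k)) with hf
  have hsize : ∀ A ∈ F, #A ≤ d := by
    intro A hA
    have hem : (∅ : Finset (Fin n)) ∈ F := hdc _ hA _ (empty_subset _)
    have := hH _ hA _ hem (disjoint_empty_right _)
    simpa using this
  have hFsum : #F = ∑ k ∈ range (d+2), f k :=
    card_eq_sum_card_fiberwise (fun x hx => mem_range.2 (by have := hsize x hx; omega))
  have hpair : ∀ k, k ≤ t → f k + f (d+1-k) ≤ n.choose k := by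
    intro k hk
    have h2 : f (d+1-k) + f k ≤ n.choose k :=
      pair_bound hdn (show k + (d+1-k) = d+1 by omega) F hdc hH
    omega
  rcases hr with rfl | rfl
  · -- even case
    have hdt : d = 2 * t := by omega
    have hsplit : ∑ k ∈ range (d+2), f k =
        ∑ k ∈ range (t+1), f k + ∑ i ∈ range (t+1), f (t+1+i) := by
      rw [show d + 2 = (t+1) + (t+1) by omega, sum_range_split]
    have hreflect : ∑ i ∈ range (t+1), f (t+1+i) = ∑ i ∈ range (t+1), f (d+1-i) := by
      rw [← sum_range_reflect (fun i => f (t+1+i)) (t+1)]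
      refine sum_congr rfl fun i hi => ?_
      rw [mem_range] at hi
      congr 1
      omega
    calc #F = ∑ k ∈ range (t+1), f k + ∑ i ∈ range (t+1), f (d+1-i) := by
          rw [hFsum, hsplit, hreflect]
      _ = ∑ k ∈ range (t+1), (f k + f (d+1-k)) := by rw [sum_add_distrib]
      _ ≤ ∑ k ∈ range (t+1), n.choose k := sum_le_sum fun k hk =>
          hpair k (by rw [mem_range] at hk; omega)
      _ = 2 ^ 0 * ∑ k ∈ range (d/2 + 1), (n - 0).choose k := by simp [ht]
  · -- odd case
    have hdt : d = 2 * t + 1 := by omega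
    have hsplit : ∑ k ∈ range (d+2), f k =
        ∑ k ∈ range (t+1), f k + ∑ i ∈ range (t+2), f (t+1+i) := by
      rw [show d + 2 = (t+1) + (t+2) by omega, sum_range_split]
    have hpeel : ∑ i ∈ range (t+2), f (t+1+i) =
        ∑ i ∈ range (t+1), f (t+2+i) + f (t+1) := by
      rw [sum_range_succ' (fun i => f (t+1+i)) (t+1)]
      simp only [Nat.add_zero]
      refine congrArg₂ _ (sum_congr rfl fun i hi => ?_) rfl
      congr 1
      omega
    have hreflect : ∑ i ∈ range (t+1), f (t+2+i) = ∑ i ∈ range (t+1), f (d+1-i) := by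
      rw [← sum_range_reflect (fun i => f (t+2+i)) (t+1)]
      refine sum_congr rfl fun i hi => ?_
      rw [mem_range] at hi
      congr 1
      omega
    have hekr : f (t+1) ≤ (n-1).choose t := by
      have h1 : ((F.filter (fun A => #A = t+1) : Finset (Finset (Fin n))) :
          Set (Finset (Fin n))).Intersecting := by
        intro A hA B hB hdisj
        rw [mem_coe, mem_filter] at hA hB
        have := hH _ hA.1 _ hB.1 hdisj
        omega
      have h2 : ((F.filter (fun A => #A = t+1) : Finset (Finset (Fin n))) :
          Set (Finset (Fin n))).Sized (t+1) := by
        intro A hA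
        rw [mem_coe, mem_filter] at hA
        exact hA.2
      have h3 : t + 1 ≤ n / 2 := by omega
      have := erdos_ko_rado h1 h2 h3
      simpa using this
    calc #F = ∑ k ∈ range (t+1), f k + (∑ i ∈ range (t+1), f (d+1-i) + f (t+1)) := by
          rw [hFsum, hsplit, hpeel, hreflect]
      _ = ∑ k ∈ range (t+1), (f k + f (d+1-k)) + f (t+1) := by rw [sum_add_distrib]; ring
      _ ≤ ∑ k ∈ range (t+1), n.choose k + (n-1).choose t := by
          refine Nat.add_le_add (sum_le_sum fun k hk =>
            hpair k (by rw [mem_range] at hk; omega)) hekr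
      _ = 2 * ∑ k ∈ range (t+1), (n-1).choose k := sum_choose_identity n t (by omega)
      _ = 2 ^ 1 * ∑ k ∈ range (d/2 + 1), (n - 1).choose k := by rw [ht]; ring

end CGK

namespace CGK

lemma mem_symmDiffFam {n : ℕ} {F : Finset (Finset (Fin n))} {A B : Finset (Fin n)}
    (hA : A ∈ F) (hB : B ∈ F) : A ∆ B ∈ symmDiffFam F := by
  rw [symmDiffFam, mem_image₂]
  exact ⟨A, hA, B, hB, rfl⟩

lemma shatters_union {n : ℕ} {F : Finset (Finset (Fin n))} (hdc : ∀ A ∈ F, ∀ B ⊆ A, B ∈ F)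
    {A B : Finset (Fin n)} (hA : A ∈ F) (hB : B ∈ F) (hAB : Disjoint A B) :
    ShattersFam (symmDiffFam F) (A ∪ B) := by
  intro S hS
  refine ⟨(S ∩ A) ∆ (S ∩ B),
    mem_symmDiffFam (hdc _ hA _ inter_subset_right) (hdc _ hB _ inter_subset_right), ?_⟩
  ext x
  have hd : x ∈ A → x ∈ B → False := fun h1 h2 => (disjoint_left.1 hAB) h1 h2
  have hSx : x ∈ S → x ∈ A ∨ x ∈ B := fun h => mem_union.1 (hS h)
  simp only [mem_inter, mem_union, Finset.mem_symmDiff]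
  tauto

lemma H_of_hVC {n d : ℕ} {F : Finset (Finset (Fin n))} (hdc : ∀ A ∈ F, ∀ B ⊆ A, B ∈ F)
    (hVC : ∀ M : Finset (Fin n), ShattersFam (symmDiffFam F) M → M.card ≤ d) :
    ∀ A ∈ F, ∀ B ∈ F, Disjoint A B → #A + #B ≤ d := by
  intro A hA B hB hd
  have := hVC _ (shatters_union hdc hA hB hd)
  rwa [card_union_of_disjoint hd] at this

end CGK

namespace CGK
open scoped FinsetFamily

/-- From a witness pair realizing trace `insert i S` in the compressed family, get both traces
`S` and `insert i S` in the original family. -/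
lemma compression_trace {n : ℕ} {F : Finset (Finset (Fin n))} {i : Fin n}
    {M S : Finset (Fin n)} (hiM : i ∈ M) (hiS : i ∉ S)
    {A' B' : Finset (Fin n)} (hA' : A' ∈ 𝓓 i F) (hB' : B' ∈ 𝓓 i F)
    (hiA : i ∈ A') (hiB : i ∉ B') (hXM : (A' ∆ B') ∩ M = insert i S) :
    (∃ X ∈ symmDiffFam F, X ∩ M = S) ∧ (∃ X ∈ symmDiffFam F, X ∩ M = insert i S) := by
  classical
  -- A' ∈ F and A'.erase i ∈ F
  have hAF : A' ∈ F ∧ A'.erase i ∈ F := by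
    rcases Down.mem_compression.1 hA' with h | h
    · exact h
    · rw [insert_eq_self.2 hiA] at h
      exact absurd h.2 h.1
  -- some B ∈ F agreeing with B' off i
  obtain ⟨B, hBF, hBe⟩ : ∃ B ∈ F, B.erase i = B' := by
    rcases Down.mem_compression.1 hB' with h | h
    · exact ⟨B', h.1, erase_eq_of_notMem hiB⟩
    · exact ⟨insert i B', h.2, erase_insert hiB⟩
  have hpt : ∀ x, (x ∈ A' ∆ B' ∧ x ∈ M) ↔ (x = i ∨ x ∈ S) := by
    intro x
    have := Finset.ext_iff.1 hXM x
    simpa [mem_inter, mem_insert] using this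
  -- pointwise descriptions
  have hB'x : ∀ x, x ≠ i → (x ∈ B ↔ x ∈ B') := by
    intro x hx
    rw [← hBe, mem_erase]
    simp [hx]
  have hA'e : ∀ x, x ≠ i → (x ∈ A'.erase i ↔ x ∈ A') := by
    intro x hx
    rw [mem_erase]
    simp [hx]
  -- the two candidate witnesses
  have hw1 : ∀ x, x ≠ i → (x ∈ (A' ∆ B) ∩ M ↔ x ∈ S) := by
    intro x hx
    have h1 := hpt x
    have h2 := hB'x x hx
    simp only [Finset.mem_symmDiff, mem_inter] at h1 ⊢
    tauto
  have hw2 : ∀ x, x ≠ i → (x ∈ (A'.erase i ∆ B) ∩ M ↔ x ∈ S) := by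
    intro x hx
    have h1 := hpt x
    have h2 := hB'x x hx
    have h3 := hA'e x hx
    simp only [Finset.mem_symmDiff, mem_inter] at h1 ⊢
    tauto
  have hw1i : i ∈ (A' ∆ B) ∩ M ↔ i ∉ B := by
    simp only [Finset.mem_symmDiff, mem_inter]
    tauto
  have hw2i : i ∈ (A'.erase i ∆ B) ∩ M ↔ i ∈ B := by
    simp only [Finset.mem_symmDiff, mem_inter, mem_erase]
    tauto
  by_cases hiB2 : i ∈ B
  · constructor
    · refine ⟨A' ∆ B, mem_symmDiffFam hAF.1 hBF, ?_⟩
      ext x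
      by_cases hx : x = i
      · subst hx
        simp only [hw1i]
        tauto
      · rw [hw1 x hx]
    · refine ⟨A'.erase i ∆ B, mem_symmDiffFam hAF.2 hBF, ?_⟩
      ext x
      by_cases hx : x = i
      · subst hx
        simp only [hw2i, mem_insert]
        tauto
      · rw [hw2 x hx, mem_insert]
        tauto
  · constructor
    · refine ⟨A'.erase i ∆ B, mem_symmDiffFam hAF.2 hBF, ?_⟩
      ext x
      by_cases hx : x = i
      · subst hx
        simp only [hw2i]
        tauto
      · rw [hw2 x hx]
    · refine ⟨A' ∆ B, mem_symmDiffFam hAF.1 hBF, ?_⟩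
      ext x
      by_cases hx : x = i
      · subst hx
        simp only [hw1i, mem_insert]
        tauto
      · rw [hw1 x hx, mem_insert]
        tauto

lemma shatters_compression {n : ℕ} {F : Finset (Finset (Fin n))} (i : Fin n)
    {M : Finset (Fin n)} (h : ShattersFam (symmDiffFam (𝓓 i F)) M) :
    ShattersFam (symmDiffFam F) M := by
  classical
  intro S hSM
  by_cases hiM : i ∈ M
  · set S₀ := S.erase i with hS₀
    have hiS₀ : i ∉ S₀ := notMem_erase _ _
    have hS₀M : insert i S₀ ⊆ M := insert_subset hiM ((erase_subset _ _).trans hSM)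
    obtain ⟨X, hX, hXM⟩ := h (insert i S₀) hS₀M
    rw [symmDiffFam, mem_image₂] at hX
    obtain ⟨A', hA', B', hB', rfl⟩ := hX
    have hiX : i ∈ A' ∆ B' := by
      have : i ∈ (A' ∆ B') ∩ M := by
        rw [hXM]
        exact mem_insert_self _ _
      exact (mem_inter.1 this).1
    rw [Finset.mem_symmDiff] at hiX
    have main : (∃ X ∈ symmDiffFam F, X ∩ M = S₀) ∧
        (∃ X ∈ symmDiffFam F, X ∩ M = insert i S₀) := by
      rcases hiX with ⟨h1, h2⟩ | ⟨h1, h2⟩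
      · exact compression_trace hiM hiS₀ hA' hB' h1 h2 hXM
      · rw [symmDiff_comm] at hXM
        exact compression_trace hiM hiS₀ hB' hA' h1 h2 hXM
    by_cases hiS : i ∈ S
    · have : insert i S₀ = S := by
        rw [hS₀, insert_erase hiS]
      rw [← this]
      exact main.2
    · have : S₀ = S := by rw [hS₀, erase_eq_of_notMem hiS]
      rw [← this]
      exact main.1
  · obtain ⟨X, hX, hXM⟩ := h S hSM
    rw [symmDiffFam, mem_image₂] at hX
    obtain ⟨A', hA', B', hB', rfl⟩ := hX
    -- replace A', B' by members of F agreeing off i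
    have repl : ∀ C' ∈ 𝓓 i F, ∃ C ∈ F, ∀ x, x ≠ i → (x ∈ C ↔ x ∈ C') := by
      intro C' hC'
      rcases Down.mem_compression.1 hC' with h1 | h1
      · exact ⟨C', h1.1, fun x hx => Iff.rfl⟩
      · refine ⟨insert i C', h1.2, fun x hx => ?_⟩
        simp [mem_insert, hx]
    obtain ⟨A, hAF, hAx⟩ := repl A' hA'
    obtain ⟨B, hBF, hBx⟩ := repl B' hB'
    refine ⟨A ∆ B, mem_symmDiffFam hAF hBF, ?_⟩
    rw [← hXM]
    ext x
    by_cases hx : x = i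
    · subst hx
      simp only [mem_inter]
      tauto
    · have h1 := hAx x hx
      have h2 := hBx x hx
      simp only [mem_inter, Finset.mem_symmDiff]
      tauto

end CGK

namespace CGK
open scoped FinsetFamily

def down_measure {n : ℕ} (F : Finset (Finset (Fin n))) : ℕ := ∑ A ∈ F, #A

lemma down_compression_lt {n : ℕ} (i : Fin n) (F : Finset (Finset (Fin n)))
    (h : 𝓓 i F ≠ F) : down_measure (𝓓 i F) < down_measure F := by
  classical
  set F2 := F.filter (fun s => s.erase i ∉ F) with hF2
  have hF2i : ∀ s ∈ F2, i ∈ s := by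
    intro s hs
    rw [hF2, mem_filter] at hs
    by_contra hc
    rw [erase_eq_of_notMem hc] at hs
    exact hs.2 hs.1
  -- the image part of the compression
  have hI : (F.image (fun s => s.erase i)).filter (fun s => s ∉ F) =
      F2.image (fun s => s.erase i) := by
    ext X
    simp only [mem_filter, mem_image, hF2]
    constructor
    · rintro ⟨⟨s, hs, rfl⟩, hX⟩
      exact ⟨s, ⟨hs, hX⟩, rfl⟩
    · rintro ⟨s, ⟨hs1, hs2⟩, rfl⟩
      exact ⟨⟨s, hs1, rfl⟩, hs2⟩
  have hinj : Set.InjOn (fun s : Finset (Fin n) => s.erase i) (F2 : Set (Finset (Fin n))) := by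
    intro X hX Y hY hXY
    have hiX := hF2i X (by rwa [← mem_coe])
    have hiY := hF2i Y (by rwa [← mem_coe])
    have : insert i (X.erase i) = insert i (Y.erase i) := by
      simp only at hXY
      rw [hXY]
    rwa [insert_erase hiX, insert_erase hiY] at this
  have hcompr : 𝓓 i F = (F.filter (fun s => s.erase i ∈ F)) ∪ F2.image (fun s => s.erase i) := by
    rw [Down.compression, disjUnion_eq_union, hI]
  have hF2ne : F2.Nonempty := by
    rw [nonempty_iff_ne_empty]
    intro hc
    apply h
    rw [hcompr, hc, image_empty, union_empty, filter_eq_self]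
    intro s hs
    by_contra hcc
    have : s ∈ F2 := by rw [hF2, mem_filter]; exact ⟨hs, hcc⟩
    rw [hc] at this
    exact notMem_empty _ this
  have hdisj : Disjoint (F.filter (fun s => s.erase i ∈ F)) (F2.image (fun s => s.erase i)) := by
    rw [disjoint_left]
    intro X hX hX2
    rw [← hI, mem_filter] at hX2
    exact hX2.2 (mem_filter.1 hX).1
  rw [down_measure, down_measure, hcompr, sum_union hdisj]
  have hsplit : ∑ A ∈ F, #A = ∑ A ∈ F.filter (fun s => s.erase i ∈ F), #A + ∑ A ∈ F2, #A := by
    rw [hF2, ← sum_union (disjoint_filter_filter_not F F _), filter_union_filter_not_eq]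
  rw [hsplit, add_lt_add_iff_left, sum_image hinj]
  refine sum_lt_sum_of_nonempty hF2ne fun s hs => ?_
  rw [card_erase_of_mem (hF2i s hs)]
  have := card_pos.2 ⟨i, hF2i s hs⟩
  omega

lemma exists_downclosed {n d : ℕ} (F : Finset (Finset (Fin n)))
    (hVC : ∀ M : Finset (Fin n), ShattersFam (symmDiffFam F) M → M.card ≤ d) :
    ∃ G : Finset (Finset (Fin n)), #G = #F ∧ (∀ A ∈ G, ∀ B ⊆ A, B ∈ G) ∧
      (∀ M : Finset (Fin n), ShattersFam (symmDiffFam G) M → M.card ≤ d) := by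
  classical
  by_cases hfix : ∀ i, 𝓓 i F = F
  · refine ⟨F, rfl, ?_, hVC⟩
    have herase : ∀ A ∈ F, ∀ i : Fin n, A.erase i ∈ F := by
      intro A hA i
      have := Down.erase_mem_compression (a := i) hA
      rwa [hfix i] at this
    have key : ∀ m : ℕ, ∀ A ∈ F, ∀ B ⊆ A, #A ≤ m → B ∈ F := by
      intro m
      induction m with
      | zero =>
        intro A hA B hBA hm
        have : A = ∅ := card_eq_zero.1 (Nat.le_zero.1 hm)
        rw [this] at hBA
        rwa [subset_empty.1 hBA, ← this]
      | succ m ih =>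
        intro A hA B hBA hm
        by_cases hBA' : B = A
        · rwa [hBA']
        · obtain ⟨x, hxA, hxB⟩ := exists_of_ssubset (Finset.ssubset_iff_subset_ne.2 ⟨hBA, hBA'⟩)
          refine ih (A.erase x) (herase A hA x) B (subset_erase.2 ⟨hBA, hxB⟩) ?_
          rw [card_erase_of_mem hxA]
          omega
    exact fun A hA B hBA => key (#A) A hA B hBA le_rfl
  · push_neg at hfix
    obtain ⟨i, hne⟩ := hfix
    have hdec := down_compression_lt i F hne
    have hVC' : ∀ M : Finset (Fin n), ShattersFam (symmDiffFam (𝓓 i F)) M → M.card ≤ d :=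
      fun M hM => hVC M (shatters_compression i hM)
    obtain ⟨G, g1, g2, g3⟩ := exists_downclosed (𝓓 i F) hVC'
    exact ⟨G, g1.trans (Down.card_compression _ _), g2, g3⟩
termination_by down_measure F

end CGK

theorem cambie_girao_kang {n d r : ℕ} (hd : 0 < d) (hdn : d < n)
    (hr : r = 0 ∨ r = 1) (hmod : d % 2 = r % 2)
    (F : Finset (Finset (Fin n)))
    (hVC : ∀ M : Finset (Fin n), ShattersFam (symmDiffFam F) M → M.card ≤ d) :
    F.card ≤ 2 ^ r * ∑ k ∈ Finset.range (d / 2 + 1), (n - r).choose k := by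
  classical
  obtain ⟨G, g1, g2, g3⟩ := CGK.exists_downclosed F hVC
  rw [← g1]
  exact CGK.count_theorem hd hdn hr hmod G g2 (CGK.H_of_hVC g2 g3)
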